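/- Coercivity of the streamline diffusion bilinear form (abstract version): Let H be a real Hilbert space, let 0 = t₀ < t₁ < ... < t_M = T be a partition, and let g : [0,T] → H be piecewise C¹ on each slab (t_m, t_{m+1}] with one-sided limits g₊(t_m), g₋(t_m). Let L(t) be a family of densely defined operators with ⟨L(t)u, u⟩ = 0 for all u in the relevant domain (skew-adjointness). Define B(g,g) = ∑_{m=0}^{M-1} ∫_{t_m}^{t_{m+1}} ⟨g' + Lg, g⟩ + δ‖g' + Lg‖² dt + ∑_{m=1}^{M-1} ⟨[g]_m, g₊(t_m)⟩ + ‖g₊(0)‖², where [g]_m = g₊(t_m) − g₋(t_m) and δ ≥ 0. Then B(g,g) = ½( ‖g₊(0)‖² + ‖g₋(T)‖² + ∑_{m=1}^{M-1} ‖[g]_m‖² + 2δ ∑_m ∫ ‖g' + Lg‖² dt ). -/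

import Mathlib

open RealInnerProductSpace MeasureTheory

/-- Coercivity of the streamline diffusion bilinear form (abstract version):
with `g m` the `C¹` branch of the solution on the `m`-th slab
`(t m, t (m+1)]`, `L` a skew family of operators (`⟨L t u, u⟩ = 0`), and
`[g]_m = g m (t m) − g (m-1) (t m)` the jumps, the bilinear form `B(g,g)`
equals
`½(‖g₊(0)‖² + ‖g₋(T)‖² + ∑ ‖[g]_m‖² + 2δ ∑ ∫ ‖g' + Lg‖²)`. -/
theorem sd_coercivity {H : Type*} [NormedAddCommGroup H] [InnerProductSpace ℝ H]
    [CompleteSpace H] (M : ℕ) (hM : 0 < M) (t : ℕ → ℝ)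
    (ht : ∀ m, t m ≤ t (m + 1)) (g g' : ℕ → ℝ → H) (L : ℝ → H →ₗ[ℝ] H)
    (hL : ∀ τ u, ⟪L τ u, u⟫ = 0)
    (hderiv : ∀ m τ, HasDerivAt (g m) (g' m τ) τ)
    (hcont : ∀ m, Continuous (g' m))
    (hcontL : ∀ m, Continuous fun τ => L τ (g m τ))
    (δ : ℝ) (hδ : 0 ≤ δ) :
    ((∑ m ∈ Finset.range M, ∫ τ in t m..t (m + 1),
        (⟪g' m τ + L τ (g m τ), g m τ⟫ + δ * ‖g' m τ + L τ (g m τ)‖ ^ 2))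
      + (∑ m ∈ Finset.Icc 1 (M - 1), ⟪g m (t m) - g (m - 1) (t m), g m (t m)⟫)
      + ‖g 0 (t 0)‖ ^ 2)
    = (1 / 2) * (‖g 0 (t 0)‖ ^ 2 + ‖g (M - 1) (t M)‖ ^ 2
      + (∑ m ∈ Finset.Icc 1 (M - 1), ‖g m (t m) - g (m - 1) (t m)‖ ^ 2)
      + 2 * δ * ∑ m ∈ Finset.range M, ∫ τ in t m..t (m + 1),
          ‖g' m τ + L τ (g m τ)‖ ^ 2) := by
  have hgc : ∀ m, Continuous (g m) := fun m =>
    continuous_iff_continuousAt.mpr fun τ => (hderiv m τ).continuousAt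
  -- Step 1: each slab integral
  have hsplit : ∀ m, (∫ τ in t m..t (m + 1),
      (⟪g' m τ + L τ (g m τ), g m τ⟫ + δ * ‖g' m τ + L τ (g m τ)‖ ^ 2))
      = (‖g m (t (m + 1))‖ ^ 2 / 2 - ‖g m (t m)‖ ^ 2 / 2)
        + δ * ∫ τ in t m..t (m + 1), ‖g' m τ + L τ (g m τ)‖ ^ 2 := by
    intro m
    have h1 : Continuous fun τ => g' m τ + L τ (g m τ) := (hcont m).add (hcontL m)
    have hc1 : Continuous fun τ => ⟪g' m τ + L τ (g m τ), g m τ⟫ := h1.inner (hgc m)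
    rw [intervalIntegral.integral_add (g := fun τ => δ * ‖g' m τ + L τ (g m τ)‖ ^ 2) (hc1.intervalIntegrable _ _)
        ((continuous_const.mul ((h1.norm).pow 2)).intervalIntegrable _ _),
      intervalIntegral.integral_const_mul]
    congr 1
    have heq : ∀ τ, ⟪g' m τ + L τ (g m τ), g m τ⟫ = ⟪g' m τ, g m τ⟫ := by
      intro τ; rw [inner_add_left, hL]; ring
    simp_rw [heq]
    have hF : ∀ τ, HasDerivAt (fun s => ‖g m s‖ ^ 2 / 2) ⟪g' m τ, g m τ⟫ τ := by
      intro τ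
      have h := ((hderiv m τ).inner ℝ (hderiv m τ)).div_const 2
      have hfe : (fun s => ‖g m s‖ ^ 2 / 2) = fun s => ⟪g m s, g m s⟫ / 2 := by
        funext s; rw [real_inner_self_eq_norm_sq]
      rw [hfe]
      refine h.congr_deriv ?_
      rw [real_inner_comm (g m τ) (g' m τ)]; ring
    rw [intervalIntegral.integral_eq_sub_of_hasDerivAt (fun τ _ => hF τ)
        (((hcont m).inner (hgc m)).intervalIntegrable _ _)]
  -- Step 2: jump identity
  have hjump : ∀ m : ℕ, ⟪g m (t m) - g (m - 1) (t m), g m (t m)⟫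
      = ‖g m (t m) - g (m - 1) (t m)‖ ^ 2 / 2
        + (‖g m (t m)‖ ^ 2 / 2 - ‖g (m - 1) (t m)‖ ^ 2 / 2) := by
    intro m
    have h1 : ‖g m (t m) - g (m - 1) (t m)‖ ^ 2
        = ‖g m (t m)‖ ^ 2 - 2 * ⟪g m (t m), g (m - 1) (t m)⟫ + ‖g (m - 1) (t m)‖ ^ 2 :=
      norm_sub_sq_real _ _
    rw [inner_sub_left, real_inner_self_eq_norm_sq]
    linear_combination -h1 / 2 + real_inner_comm (g (m - 1) (t m)) (g m (t m))
  -- Icc sums as range sums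
  have hIcc : ∀ f : ℕ → ℝ, ∑ m ∈ Finset.Icc 1 (M - 1), f m
      = ∑ i ∈ Finset.range (M - 1), f (i + 1) := by
    intro f
    have hMM : M - 1 + 1 = M := by omega
    rw [← Finset.Ico_add_one_right_eq_Icc, hMM, Finset.sum_Ico_eq_sum_range]
    simp [Nat.add_comm]
  -- Step 3: telescoping
  have htel : ∑ m ∈ Finset.range M, (‖g m (t (m + 1))‖ ^ 2 / 2 - ‖g m (t m)‖ ^ 2 / 2)
      + ∑ m ∈ Finset.Icc 1 (M - 1), (‖g m (t m)‖ ^ 2 / 2 - ‖g (m - 1) (t m)‖ ^ 2 / 2)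
      = ‖g (M - 1) (t M)‖ ^ 2 / 2 - ‖g 0 (t 0)‖ ^ 2 / 2 := by
    obtain ⟨N, rfl⟩ : ∃ N, M = N + 1 := ⟨M - 1, (Nat.succ_pred_eq_of_pos hM).symm⟩
    rw [hIcc]
    simp only [Nat.add_sub_cancel]
    rw [Finset.sum_sub_distrib, Finset.sum_sub_distrib,
      Finset.sum_range_succ (fun m => ‖g m (t (m + 1))‖ ^ 2 / 2) N,
      Finset.sum_range_succ' (fun m => ‖g m (t m)‖ ^ 2 / 2) N]
    ring
  -- assemble
  rw [Finset.sum_congr rfl fun m _ => hsplit m, Finset.sum_add_distrib, ← Finset.mul_sum,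
    Finset.sum_congr rfl fun m _ => hjump m, Finset.sum_add_distrib]
  have hJ : ∑ m ∈ Finset.Icc 1 (M - 1), ‖g m (t m) - g (m - 1) (t m)‖ ^ 2 / 2
      = (∑ m ∈ Finset.Icc 1 (M - 1), ‖g m (t m) - g (m - 1) (t m)‖ ^ 2) / 2 :=
    (Finset.sum_div _ _ _).symm
  rw [hJ]
  linear_combination htel
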